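/- Let μ ∈ V be dominant, and let w ∈ W be such that w(μ − ρ) = {μ − ρ} is dominant, with reduced expression w = s_{γ₁}⋯s_{γ_n} into simple reflections. Then {μ − ρ} − (μ − ρ) = Σ_{k=1}^n ⟨ρ − μ, γ_k∨⟩ β_k, where β_k := s_{γ₁}⋯s_{γ_{k−1}}(γ_k) is a positive root for each k, and each coefficient satisfies ⟨ρ − μ, γ_k∨⟩ ≤ 1. -/

import Mathlib

open scoped RealInnerProductSpace

noncomputable section

/-- The pairing `⟨v, a∨⟩ = 2⟪v,a⟫/⟪a,a⟫` of `v` against the coroot of `a`. -/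
def copair {V : Type*} [NormedAddCommGroup V] [InnerProductSpace ℝ V] (v a : V) : ℝ :=
  2 * ⟪v, a⟫ / ⟪a, a⟫

/-- The orthogonal reflection `s_a` in the hyperplane orthogonal to `a`,
as a linear isometry of `V`. -/
def sRefl {V : Type*} [NormedAddCommGroup V] [InnerProductSpace ℝ V] [FiniteDimensional ℝ V]
    (a : V) : V ≃ₗᵢ[ℝ] V :=
  Submodule.reflection (ℝ ∙ a)ᗮ

/-- A finite crystallographic reduced root system `Φ` spanning a finite-dimensional real inner
product space `V`, together with a choice of positive roots `pos`, simple roots `sroot`,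
and fundamental weights `fw`. -/
structure RootSystemCtx (V : Type*) [NormedAddCommGroup V] [InnerProductSpace ℝ V]
    [FiniteDimensional ℝ V] where
  l : ℕ
  Φ : Finset V
  pos : Finset V
  sroot : Fin l → V
  fw : Fin l → V
  nonzero : ∀ a ∈ Φ, a ≠ (0 : V)
  span_top : Submodule.span ℝ (Φ : Set V) = ⊤
  reduced : ∀ a ∈ Φ, ∀ t : ℝ, t • a ∈ Φ → t = 1 ∨ t = -1
  refl_mem : ∀ a ∈ Φ, ∀ b ∈ Φ, sRefl a b ∈ Φ
  crystal : ∀ a ∈ Φ, ∀ b ∈ Φ, ∃ n : ℤ, copair b a = (n : ℝ)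
  pos_subset : pos ⊆ Φ
  mem_pos_or : ∀ a ∈ Φ, (a ∈ pos ∧ -a ∉ pos) ∨ (a ∉ pos ∧ -a ∈ pos)
  sroot_mem : ∀ i, sroot i ∈ pos
  sroot_indep : LinearIndependent ℝ sroot
  pos_nat_comb : ∀ a ∈ pos, ∃ c : Fin l → ℕ, a = ∑ i, (c i : ℝ) • sroot i
  fw_pairing : ∀ i j, copair (fw i) (sroot j) = if i = j then 1 else 0

namespace RootSystemCtx

variable {V : Type*} [NormedAddCommGroup V] [InnerProductSpace ℝ V] [FiniteDimensional ℝ V]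
variable (R : RootSystemCtx V)

/-- The half sum of the positive roots, `ρ = Σ_i ϖ_i`. -/
def rho : V := ∑ i, R.fw i

/-- The Weyl group `W`, the subgroup of the isometry group of `V` generated by the
reflections in the roots. -/
def weylGroup : Subgroup (V ≃ₗᵢ[ℝ] V) :=
  Subgroup.closure {g | ∃ a ∈ R.Φ, g = sRefl a}

/-- `γ` is an expression of `w` as a product of simple reflections. -/
def IsExpression (w : V ≃ₗᵢ[ℝ] V) (γ : List (Fin R.l)) : Prop :=
  w = (γ.map fun i => sRefl (R.sroot i)).prod

/-- `γ` is a reduced expression of `w`: an expression of minimal possible length. -/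
def IsReducedExpression (w : V ≃ₗᵢ[ℝ] V) (γ : List (Fin R.l)) : Prop :=
  R.IsExpression w γ ∧ ∀ γ' : List (Fin R.l), R.IsExpression w γ' → γ.length ≤ γ'.length

/-- A weight is dominant if it pairs nonnegatively with every simple coroot. -/
def IsDominant (v : V) : Prop := ∀ i, 0 ≤ copair v (R.sroot i)

/-- `d` is the dominant representative `{v}` of the Weyl group orbit of `v`. -/
def IsDomRep (v d : V) : Prop := R.IsDominant d ∧ ∃ w ∈ R.weylGroup, w v = d

end RootSystemCtx

/-! ### Auxiliary lemmas -/

section AuxCopair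

variable {V : Type*} [NormedAddCommGroup V] [InnerProductSpace ℝ V]

theorem copair_eq_mul (v a : V) : copair v a = (2 / ⟪a, a⟫) * ⟪v, a⟫ := by
  unfold copair; ring

theorem copair_sub (x y a : V) : copair (x - y) a = copair x a - copair y a := by
  simp only [copair_eq_mul, inner_sub_left]; ring

theorem copair_neg (x a : V) : copair (-x) a = - copair x a := by
  simp only [copair_eq_mul, inner_neg_left]; ring

theorem copair_sum {ι : Type*} (s : Finset ι) (g : ι → V) (a : V) :
    copair (∑ i ∈ s, g i) a = ∑ i ∈ s, copair (g i) a := by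
  simp only [copair_eq_mul, sum_inner, Finset.mul_sum]

theorem copair_self (a : V) (ha : a ≠ 0) : copair a a = 2 := by
  rw [copair_eq_mul, div_mul_eq_mul_div, mul_div_assoc,
    div_self ((inner_self_ne_zero (𝕜 := ℝ)).mpr ha), mul_one]

end AuxCopair

section AuxRefl

variable {V : Type*} [NormedAddCommGroup V] [InnerProductSpace ℝ V] [FiniteDimensional ℝ V]

theorem sRefl_apply (a v : V) (ha : a ≠ 0) : sRefl a v = v - copair v a • a := by
  have haa : (⟪a, a⟫ : ℝ) ≠ 0 := (inner_self_ne_zero (𝕜 := ℝ)).mpr ha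
  set c : ℝ := ⟪v, a⟫ / ⟪a, a⟫ with hc
  have hv : v = (v - c • a) + c • a := by abel
  have h1 : (v - c • a) ∈ (ℝ ∙ a)ᗮ := by
    rw [Submodule.mem_orthogonal_singleton_iff_inner_left, inner_sub_left,
      real_inner_smul_left, hc, div_mul_cancel₀ _ haa, sub_self]
  have h2 : sRefl a (c • a) = c • (-a) := by
    rw [show sRefl a (c • a) = c • sRefl a a from map_smul _ c a]
    rw [show sRefl a a = -a from Submodule.reflection_orthogonalComplement_singleton_eq_neg a]
  calc sRefl a v = sRefl a (v - c • a) + sRefl a (c • a) := by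
        conv_lhs => rw [hv]
        exact map_add _ _ _
    _ = (v - c • a) + c • (-a) := by
        rw [h2, show sRefl a (v - c • a) = v - c • a from Submodule.reflection_mem_subspace_eq_self h1]
    _ = v - copair v a • a := by
        rw [copair_eq_mul, hc]
        rw [show (2 / ⟪a, a⟫ * ⟪v, a⟫ : ℝ) = ⟪v, a⟫ / ⟪a, a⟫ + ⟪v, a⟫ / ⟪a, a⟫ by ring]
        rw [add_smul, smul_neg]
        abel

theorem sRefl_mul_self (a : V) : sRefl a * sRefl a = 1 := Submodule.reflection_mul_reflection _

theorem copair_map (u : V ≃ₗᵢ[ℝ] V) (v a : V) : copair (u v) (u a) = copair v a := by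
  simp only [copair_eq_mul, u.inner_map_map]

theorem sRefl_map (u : V ≃ₗᵢ[ℝ] V) (a v : V) (ha : a ≠ 0) :
    sRefl (u a) (u v) = u (sRefl a v) := by
  have hua : u a ≠ 0 := by simpa using ha
  rw [sRefl_apply _ _ ha, sRefl_apply _ _ hua, copair_map, map_sub, map_smul]

theorem sRefl_conj (u : V ≃ₗᵢ[ℝ] V) (a : V) (ha : a ≠ 0) :
    sRefl (u a) = u * sRefl a * u⁻¹ := by
  ext x
  have : x = u (u⁻¹ x) := (u.apply_symm_apply x).symm
  calc sRefl (u a) x = sRefl (u a) (u (u⁻¹ x)) := by rw [← this]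
    _ = u (sRefl a (u⁻¹ x)) := sRefl_map u a _ ha
    _ = (u * sRefl a * u⁻¹) x := rfl

end AuxRefl

namespace RootSystemCtx

variable {V : Type*} [NormedAddCommGroup V] [InnerProductSpace ℝ V] [FiniteDimensional ℝ V]
variable (R : RootSystemCtx V)

theorem sroot_mem_Φ (i : Fin R.l) : R.sroot i ∈ R.Φ := R.pos_subset (R.sroot_mem i)

theorem sroot_ne_zero (i : Fin R.l) : R.sroot i ≠ 0 := R.nonzero _ (R.sroot_mem_Φ i)

/-- A simple reflection permutes the positive roots other than its own simple root. -/
theorem simple_refl_pos (i : Fin R.l) {b : V} (hb : b ∈ R.pos) (hne : b ≠ R.sroot i) :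
    sRefl (R.sroot i) b ∈ R.pos := by
  obtain ⟨c, hc⟩ := R.pos_nat_comb b hb
  -- there is a coefficient away from `i` which is nonzero
  have hj : ∃ j, j ≠ i ∧ c j ≠ 0 := by
    by_contra hcon
    push_neg at hcon
    have hb' : b = (c i : ℝ) • R.sroot i := by
      rw [hc, Finset.sum_eq_single i]
      · intro j _ hji; rw [hcon j hji]; simp
      · intro hni; exact absurd (Finset.mem_univ i) hni
    rcases Nat.eq_zero_or_pos (c i) with h0 | h0
    · exact R.nonzero b (R.pos_subset hb) (by simp [hb', h0])
    · have hmem : (c i : ℝ) • R.sroot i ∈ R.Φ := hb' ▸ R.pos_subset hb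
      rcases R.reduced _ (R.sroot_mem_Φ i) _ hmem with h1 | h1
      · exact hne (by rw [hb', h1, one_smul])
      · have : (0:ℝ) ≤ (c i : ℝ) := Nat.cast_nonneg _
        rw [h1] at this; linarith
  obtain ⟨j, hji, hcj⟩ := hj
  have hmem : sRefl (R.sroot i) b ∈ R.Φ := R.refl_mem _ (R.sroot_mem_Φ i) b (R.pos_subset hb)
  rcases R.mem_pos_or _ hmem with h | h
  · exact h.1
  exfalso
  obtain ⟨d, hd⟩ := R.pos_nat_comb _ h.2
  have hrefl : sRefl (R.sroot i) b = b - copair b (R.sroot i) • R.sroot i :=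
    sRefl_apply _ _ (R.sroot_ne_zero i)
  set m : ℝ := copair b (R.sroot i) with hm
  have hsum : ∑ j', (((c j' : ℝ) + (d j' : ℝ)) - (if j' = i then m else 0)) • R.sroot j' = 0 := by
    have e1 : ∑ j', (if j' = i then m else 0) • R.sroot j' = m • R.sroot i := by
      rw [Finset.sum_eq_single i]
      · simp
      · intro j' _ hji'; simp [hji']
      · intro hni; exact absurd (Finset.mem_univ i) hni
    have e2 : ∑ j', ((c j' : ℝ) + (d j' : ℝ)) • R.sroot j'
        = b + (- sRefl (R.sroot i) b) := by
      simp only [add_smul, Finset.sum_add_distrib, ← hc, ← hd]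
    simp only [sub_smul, Finset.sum_sub_distrib, e1, e2, hrefl]
    abel
  have hind := Fintype.linearIndependent_iff.mp R.sroot_indep _ hsum j
  rw [if_neg hji] at hind
  have h1 : (0:ℝ) ≤ (c j : ℝ) := Nat.cast_nonneg _
  have h2 : (0:ℝ) ≤ (d j : ℝ) := Nat.cast_nonneg _
  have : (c j : ℝ) = 0 := by linarith [hind]
  exact hcj (by exact_mod_cast this)

theorem eq_sroot_of_refl_neg (i : Fin R.l) {b : V} (hb : b ∈ R.pos)
    (h : sRefl (R.sroot i) b ∉ R.pos) : b = R.sroot i := by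
  by_contra hne
  exact h (R.simple_refl_pos i hb hne)

/-- The deletion lemma: if a word sends the simple root `α_j` to a negative root, then
appending `s_j` to the word equals the word with one letter deleted. -/
theorem deletion (l : List (Fin R.l)) : ∀ j : Fin R.l,
    (l.map fun i => sRefl (R.sroot i)).prod (R.sroot j) ∉ R.pos →
    ∃ (t : Fin R.l) (l1 l2 : List (Fin R.l)), l = l1 ++ t :: l2 ∧
      (l.map fun i => sRefl (R.sroot i)).prod * sRefl (R.sroot j)
        = ((l1 ++ l2).map fun i => sRefl (R.sroot i)).prod := by
  induction l with
  | nil =>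
    intro j h
    simp only [List.map_nil, List.prod_nil, LinearIsometryEquiv.coe_one, id_eq] at h
    exact absurd (R.sroot_mem j) h
  | cons i l' ih =>
    intro j h
    set f : Fin R.l → (V ≃ₗᵢ[ℝ] V) := fun i => sRefl (R.sroot i) with hf
    set P : V ≃ₗᵢ[ℝ] V := (l'.map f).prod with hP
    have hsplit : ((i :: l').map f).prod = f i * P := by
      rw [List.map_cons, List.prod_cons]
    by_cases he : P (R.sroot j) ∈ R.pos
    · -- the sign change happens right here
      have h' : sRefl (R.sroot i) (P (R.sroot j)) ∉ R.pos := by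
        intro hmem
        apply h
        rw [hsplit]
        exact hmem
      have heq : P (R.sroot j) = R.sroot i := R.eq_sroot_of_refl_neg i he h'
      refine ⟨i, [], l', rfl, ?_⟩
      have hconj : f i = P * f j * P⁻¹ := by
        rw [hf]
        simp only
        rw [← heq]
        exact sRefl_conj P (R.sroot j) (R.sroot_ne_zero j)
      rw [hsplit, hconj]
      show P * f j * P⁻¹ * (P * f j) = P
      have h2 : f j * f j = 1 := sRefl_mul_self _
      calc P * f j * P⁻¹ * (P * f j) = P * (f j * f j) := by group
        _ = P := by rw [h2, mul_one]
    · obtain ⟨t, l1, l2, hl, hp⟩ := ih j he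
      refine ⟨t, i :: l1, l2, by rw [hl]; rfl, ?_⟩
      rw [hsplit, mul_assoc, hp]
      rw [show ((i :: l1) ++ l2 : List (Fin R.l)) = i :: (l1 ++ l2) from rfl,
        List.map_cons, List.prod_cons]

/-- The telescoping identity. -/
theorem telescope (l : List (Fin R.l)) (lam : V) :
    (l.map fun i => sRefl (R.sroot i)).prod lam - lam = ∑ k : Fin l.length,
      copair (-lam) (R.sroot (l.get k)) •
        ((l.take (k : ℕ)).map fun i => sRefl (R.sroot i)).prod (R.sroot (l.get k)) := by
  induction l with
  | nil => simp
  | cons i l' ih =>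
    set f : Fin R.l → (V ≃ₗᵢ[ℝ] V) := fun i => sRefl (R.sroot i) with hf
    set P : V ≃ₗᵢ[ℝ] V := (l'.map f).prod with hP
    have hsplit : ((i :: l').map f).prod = f i * P := by
      rw [List.map_cons, List.prod_cons]
    have key : ((i :: l').map f).prod lam - lam
        = f i (P lam - lam) + (f i lam - lam) := by
      rw [hsplit, map_sub]
      show (f i) (P lam) - lam = ((f i) (P lam) - (f i) lam) + ((f i) lam - lam)
      abel
    have term0 : f i lam - lam = copair (-lam) (R.sroot i) • R.sroot i := by
      rw [hf]
      simp only
      rw [sRefl_apply _ _ (R.sroot_ne_zero i), copair_neg, neg_smul]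
      abel
    set g : Fin (l'.length + 1) → V := fun k =>
      copair (-lam) (R.sroot ((i :: l').get k)) •
        (((i :: l').take ((k : ℕ))).map f).prod (R.sroot ((i :: l').get k)) with hg
    have hsum : (∑ k : Fin ((i :: l').length),
        copair (-lam) (R.sroot ((i :: l').get k)) •
          (((i :: l').take ((k : ℕ))).map f).prod (R.sroot ((i :: l').get k)))
        = g 0 + ∑ k : Fin l'.length, g k.succ := Fin.sum_univ_succ g
    have hg0 : g 0 = copair (-lam) (R.sroot i) • R.sroot i := by
      simp [hg]
    have hgs : ∀ k : Fin l'.length, g k.succ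
        = copair (-lam) (R.sroot (l'.get k)) •
          (f i) (((l'.take (k : ℕ)).map f).prod (R.sroot (l'.get k))) := by
      intro k
      show copair (-lam) (R.sroot ((i :: l').get k.succ)) •
          (((i :: l').take ((k : ℕ) + 1)).map f).prod (R.sroot ((i :: l').get k.succ)) = _
      rw [show (i :: l').get k.succ = l'.get k from rfl]
      rw [List.take_succ_cons, List.map_cons, List.prod_cons]
      rfl
    rw [key, ih, hsum, hg0, term0, map_sum]
    rw [Finset.sum_congr rfl fun k _ => hgs k]
    rw [Finset.sum_congr rfl fun (k : Fin l'.length) (_ : k ∈ Finset.univ) =>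
      (map_smul (f i) (copair (-lam) (R.sroot (l'.get k)))
        (((l'.take (k : ℕ)).map f).prod (R.sroot (l'.get k))) : _)]
    abel

end RootSystemCtx


/-- Let `μ` be dominant and let `w ∈ W` be such that `w(μ − ρ) = {μ − ρ}` is
dominant, with reduced expression `w = s_{γ₁}⋯s_{γ_n}`.  Then
`{μ − ρ} − (μ − ρ) = Σ_k ⟨ρ − μ, γ_k∨⟩ • β_k`, where each `β_k := s_{γ₁}⋯s_{γ_{k−1}}(γ_k)`
is a positive root and each coefficient satisfies `⟨ρ − μ, γ_k∨⟩ ≤ 1`. -/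
theorem statement14 {V : Type*} [NormedAddCommGroup V] [InnerProductSpace ℝ V]
    [FiniteDimensional ℝ V] (R : RootSystemCtx V)
    (μ : V) (hμ : R.IsDominant μ)
    (w : V ≃ₗᵢ[ℝ] V) (hw : w ∈ R.weylGroup) (hdom : R.IsDominant (w (μ - R.rho)))
    (γ : List (Fin R.l)) (hred : R.IsReducedExpression w γ) :
    (∀ k : Fin γ.length,
      ((γ.take (k : ℕ)).map fun i => sRefl (R.sroot i)).prod (R.sroot (γ.get k)) ∈ R.pos) ∧
    (∀ k : Fin γ.length, copair (R.rho - μ) (R.sroot (γ.get k)) ≤ 1) ∧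
    w (μ - R.rho) - (μ - R.rho) = ∑ k : Fin γ.length,
      copair (R.rho - μ) (R.sroot (γ.get k)) •
        (((γ.take (k : ℕ)).map fun i => sRefl (R.sroot i)).prod (R.sroot (γ.get k))) := by
  obtain ⟨hexp, hmin⟩ := hred
  refine ⟨?_, ?_, ?_⟩
  · intro k
    by_contra hneg
    obtain ⟨t, l1, l2, hl, hp⟩ := R.deletion (γ.take (k : ℕ)) (γ.get k) hneg
    set γ' := (l1 ++ l2) ++ γ.drop ((k : ℕ) + 1) with hγ'
    have hksucc : γ.drop (k : ℕ) = γ.get k :: γ.drop ((k : ℕ) + 1) := by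
      rw [List.get_eq_getElem]; exact List.drop_eq_getElem_cons k.isLt
    have hexp' : R.IsExpression w γ' := by
      unfold RootSystemCtx.IsExpression at hexp ⊢
      rw [hexp]
      conv_lhs => rw [← List.take_append_drop (k : ℕ) γ, hksucc]
      rw [List.map_append, List.prod_append, List.map_cons, List.prod_cons]
      rw [← mul_assoc, hp]
      simp only [hγ', List.map_append, List.prod_append, mul_assoc]
    have hlen := hmin γ' hexp'
    have h1 : (γ.take (k : ℕ)).length = (k : ℕ) := by
      rw [List.length_take]; exact min_eq_left (le_of_lt k.isLt)
    have h2 : (γ.drop ((k : ℕ) + 1)).length = γ.length - ((k : ℕ) + 1) :=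
      List.length_drop
    have h3 : (k : ℕ) = l1.length + l2.length + 1 := by
      have := congrArg List.length hl
      rw [h1] at this
      simp [List.length_append] at this
      omega
    have h4 : γ'.length = l1.length + l2.length + (γ.length - ((k : ℕ) + 1)) := by
      simp [hγ', List.length_append, h2]
      omega
    have hk := k.isLt
    omega
  · intro k
    have h1 : copair R.rho (R.sroot (γ.get k)) = 1 := by
      unfold RootSystemCtx.rho
      rw [copair_sum]
      rw [Finset.sum_congr rfl fun j _ => R.fw_pairing j (γ.get k)]
      simp
    rw [copair_sub, h1]
    have := hμ (γ.get k)
    linarith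
  · rw [hexp, R.telescope γ (μ - R.rho)]
    refine Finset.sum_congr rfl fun k _ => ?_
    rw [neg_sub]
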